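/- Suppose M right nodes are each independently connected to a uniformly random 2-element subset of k left nodes, with M = αC(k,2), α ≥ k^{−δ}(1−o(1)), δ ∈ (0,1). Let t_0 = (k−1)/20 and suppose the peeling process has run for t_0+1 iterations. Then, conditioned on the process not having terminated, the probability that some remaining left node is connected to no degree-1 right node is at most k·exp(−k^{1−δ}/25), for sufficiently large k. -/

import Mathlib

open MeasureTheory ProbabilityTheory

/-- After `t₀ + 1` peeling iterations (with `t₀ = (k−1)/20`) on the bipartite graph in
which each of `M = α C(k,2)` right nodes independently connects to a uniformly random
2-element subset of `k` left nodes (`α ≥ k^{−δ}(1−o(1))`), the probability that some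
remaining left node is connected to no degree-1 right node (i.e. is paired with the
peeled set `P` by no right node) is at most `k exp(−k^{1−δ}/25)`, for sufficiently
large `k`. -/
theorem peeling_all_recoverable (δ : ℝ) (hδ0 : 0 < δ) (hδ1 : δ < 1)
    (α : ℕ → ℝ) (ε : ℕ → ℝ)
    (hε : Filter.Tendsto ε Filter.atTop (nhds 0))
    (hαlb : ∀ k : ℕ, (k : ℝ) ^ (-δ) * (1 - ε k) ≤ α k)
    (hα01 : ∀ k : ℕ, 0 < α k ∧ α k < 1)
    (M : ℕ → ℕ) (hM : ∀ k, (M k : ℝ) = α k * (k.choose 2)) :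
    ∃ K : ℕ, ∀ k : ℕ, K ≤ k →
    ∀ {Ω : Type} [MeasurableSpace Ω] (μ : Measure Ω), IsProbabilityMeasure μ →
    ∀ (T : Fin (M k) → Ω → Finset (Fin k)),
      (∀ j s, MeasurableSet {ω | T j ω = s}) →
      iIndepFun (m := fun _ => ⊤) T μ →
      (∀ j ω, (T j ω).card = 2) →
      (∀ j (s : Finset (Fin k)), s.card = 2 → μ {ω | T j ω = s} = 1 / (k.choose 2)) →
    ∀ t₀ : ℕ, (t₀ : ℝ) = ((k : ℝ) - 1) / 20 →
    ∀ P : Finset (Fin k), P.card = t₀ + 1 →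
      (μ {ω | ∃ l ∉ P, ∀ j, ¬ ∃ x ∈ P, T j ω = {l, x}}).toReal
        ≤ (k : ℝ) * Real.exp (-(k : ℝ) ^ (1 - δ) / 25) := by
  obtain ⟨K₁, hK₁⟩ := (hε.eventually_lt_const (by norm_num : (0:ℝ) < 1/5)).exists_forall_of_atTop
  refine ⟨max K₁ 41, fun k hk Ω _ μ hμ T hTmeas hTindep hTcard hTunif t₀ ht₀ P hP => ?_⟩
  have hk41 : (41 : ℕ) ≤ k := le_trans (le_max_right _ _) hk
  have hεk : ε k < 1/5 := hK₁ k (le_trans (le_max_left _ _) hk)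
  have hk0 : (0:ℝ) < k := by positivity
  have hk41R : (41:ℝ) ≤ k := by exact_mod_cast hk41
  have hC : ((k.choose 2 : ℕ) : ℝ) = k * ((k:ℝ) - 1) / 2 := Nat.cast_choose_two ℝ k
  have hCpos : (0:ℝ) < (k.choose 2 : ℕ) := by rw [hC]; nlinarith
  have ht1 : (t₀:ℝ) + 1 = ((k:ℝ) + 19) / 20 := by rw [ht₀]; ring
  have ht₀leR : (t₀:ℝ) + 1 ≤ (k.choose 2 : ℕ) := by rw [ht1, hC]; nlinarith
  have ht₀le : t₀ + 1 ≤ k.choose 2 := by exact_mod_cast ht₀leR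
  -- the per-left-node events
  set A : Fin k → Set Ω := fun l => {ω | ∀ j, ¬ ∃ x ∈ P, T j ω = {l, x}} with hA
  have hEvent : {ω | ∃ l ∉ P, ∀ j, ¬ ∃ x ∈ P, T j ω = {l, x}} = ⋃ l ∈ Pᶜ, A l := by
    ext ω; simp [hA]
  set p : ℝ := ((t₀:ℝ) + 1) / (k.choose 2 : ℕ) with hp
  have hp0 : 0 ≤ p := by positivity
  have hp1 : p ≤ 1 := by rw [hp, div_le_one hCpos]; exact ht₀leR
  -- main per-node computation
  have hAl : ∀ l ∉ P, (μ (A l)).toReal = (1 - p) ^ (M k) := by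
    intro l hl
    set F : Finset (Finset (Fin k)) := P.image (fun x => ({l, x} : Finset (Fin k))) with hF
    have hFcard : F.card = t₀ + 1 := by
      rw [hF, Finset.card_image_of_injOn, hP]
      intro x hx y hy hxy
      have hxl : x ≠ l := fun h => hl (h ▸ hx)
      have : x ∈ ({l, y} : Finset (Fin k)) := by
        rw [show ({l, y} : Finset (Fin k)) = {l, x} from hxy.symm]; simp
      simp only [Finset.mem_insert, Finset.mem_singleton] at this
      exact this.resolve_left hxl
    have hsets : A l = ⋂ j ∈ (Finset.univ : Finset (Fin (M k))),
        T j ⁻¹' ((↑F : Set (Finset (Fin k)))ᶜ) := by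
      ext ω
      simp only [hA, Set.mem_setOf_eq, Set.mem_iInter, Set.mem_preimage, Set.mem_compl_iff,
        Finset.mem_coe, hF, Finset.mem_image, Finset.mem_univ, forall_const]
      constructor
      · intro h j ⟨x, hx, hxe⟩; exact h j ⟨x, hx, hxe.symm⟩
      · intro h j ⟨x, hx, hxe⟩; exact h j ⟨x, hx, hxe.symm⟩
    have hmul : μ (⋂ j ∈ (Finset.univ : Finset (Fin (M k))), T j ⁻¹' ((↑F : Set (Finset (Fin k)))ᶜ))
        = ∏ j : Fin (M k), μ (T j ⁻¹' ((↑F : Set (Finset (Fin k)))ᶜ)) :=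
      hTindep.measure_inter_preimage_eq_mul Finset.univ
        (sets := fun _ => (↑F : Set (Finset (Fin k)))ᶜ) (fun i _ => trivial)
    -- measure of each factor
    have hfac : ∀ j, μ (T j ⁻¹' ((↑F : Set (Finset (Fin k)))ᶜ))
        = 1 - ((t₀ : ENNReal) + 1) / (k.choose 2 : ℕ) := by
      intro j
      have hpre : T j ⁻¹' (↑F : Set (Finset (Fin k))) = ⋃ s ∈ F, {ω | T j ω = s} := by
        ext ω; simp
      have hmeasF : MeasurableSet (T j ⁻¹' (↑F : Set (Finset (Fin k)))) := by
        rw [hpre]; exact MeasurableSet.biUnion F.countable_toSet (fun s _ => hTmeas j s)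
      have hμF : μ (T j ⁻¹' (↑F : Set (Finset (Fin k)))) = ((t₀ : ENNReal) + 1) / (k.choose 2 : ℕ) := by
        rw [hpre, measure_biUnion_finset ?_ (fun s _ => hTmeas j s)]
        · have : ∀ s ∈ F, μ {ω | T j ω = s} = 1 / (k.choose 2 : ℕ) := by
            intro s hs
            rw [hF, Finset.mem_image] at hs
            obtain ⟨x, hx, rfl⟩ := hs
            refine hTunif j _ (Finset.card_pair ?_)
            exact fun h => hl (h ▸ hx)
          rw [Finset.sum_congr rfl this, Finset.sum_const, hFcard]
          push_cast
          rw [nsmul_eq_mul, div_eq_mul_inv, one_mul, div_eq_mul_inv]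
          push_cast
          ring
        · intro s hs t ht hst
          simp only [Function.onFun, Set.disjoint_left]
          intro ω h1 h2
          exact hst (h1.symm.trans h2)
      rw [Set.preimage_compl, measure_compl hmeasF (measure_ne_top μ _), hμF, measure_univ]
    rw [hsets, hmul]
    simp only [hfac, Finset.prod_const, Finset.card_univ, Fintype.card_fin]
    have hq1 : ((t₀ : ENNReal) + 1) / (k.choose 2 : ℕ) ≤ 1 := by
      rw [ENNReal.div_le_iff (by exact_mod_cast hCpos.ne') (by simp)]
      rw [one_mul]
      exact_mod_cast ht₀le
    rw [ENNReal.toReal_pow, ENNReal.toReal_sub_of_le hq1 (by simp), ENNReal.toReal_one]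
    congr 2
    rw [hp, ENNReal.toReal_div,
      ENNReal.toReal_add (ENNReal.natCast_ne_top t₀) ENNReal.one_ne_top]
    simp
  -- union bound
  have hub : (μ {ω | ∃ l ∉ P, ∀ j, ¬ ∃ x ∈ P, T j ω = {l, x}}).toReal
      ≤ ∑ l ∈ Pᶜ, (μ (A l)).toReal := by
    rw [hEvent, ← ENNReal.toReal_sum (fun l _ => measure_ne_top μ _)]
    refine ENNReal.toReal_mono ?_ (measure_biUnion_finset_le Pᶜ A)
    exact (ENNReal.sum_lt_top.2 fun l _ => measure_lt_top μ _).ne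
  have hsum : ∑ l ∈ Pᶜ, (μ (A l)).toReal ≤ (k:ℝ) * (1 - p) ^ (M k) := by
    calc ∑ l ∈ Pᶜ, (μ (A l)).toReal = ∑ l ∈ Pᶜ, (1 - p) ^ (M k) := by
          refine Finset.sum_congr rfl fun l hl => hAl l (Finset.mem_compl.mp hl)
      _ = (Pᶜ.card : ℝ) * (1 - p) ^ (M k) := by rw [Finset.sum_const, nsmul_eq_mul]
      _ ≤ (k:ℝ) * (1 - p) ^ (M k) := by
          refine mul_le_mul_of_nonneg_right ?_ (pow_nonneg (by linarith) _)
          exact_mod_cast (Finset.card_le_card (Finset.subset_univ _)).trans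
            (le_of_eq (Finset.card_univ.trans (Fintype.card_fin k)))
  -- numeric bound
  have hnum : (1 - p) ^ (M k) ≤ Real.exp (-(k:ℝ) ^ (1 - δ) / 25) := by
    have h1 : (1 - p) ^ (M k) ≤ Real.exp (-p) ^ (M k) := by
      refine pow_le_pow_left₀ (by linarith) ?_ _
      have := Real.add_one_le_exp (-p); linarith
    have h2 : Real.exp (-p) ^ (M k) = Real.exp (-(p * M k)) := by
      rw [← Real.exp_nat_mul]; ring_nf
    have hpM : p * M k = α k * ((t₀:ℝ) + 1) := by
      rw [hp, hM]; field_simp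
    have hrp : (k:ℝ) ^ (1 - δ) = (k:ℝ) * (k:ℝ) ^ (-δ) := by
      rw [show (1:ℝ) - δ = 1 + (-δ) by ring, Real.rpow_add hk0, Real.rpow_one]
    have hlb : (k:ℝ) ^ (1 - δ) / 25 ≤ α k * ((t₀:ℝ) + 1) := by
      have hklb : (k:ℝ) ^ (-δ) * (1 - ε k) ≤ α k := hαlb k
      have hrpos : (0:ℝ) < (k:ℝ) ^ (-δ) := Real.rpow_pos_of_pos hk0 _
      have ht1' : (k:ℝ) / 20 ≤ (t₀:ℝ) + 1 := by rw [ht1]; linarith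
      have hαpos : 0 < α k := (hα01 k).1
      rw [hrp]
      calc (k:ℝ) * (k:ℝ) ^ (-δ) / 25 = (4/5) * ((k:ℝ) ^ (-δ) * ((k:ℝ)/20)) := by ring
        _ ≤ (4/5) * ((k:ℝ) ^ (-δ) * ((t₀:ℝ)+1)) := by
            refine mul_le_mul_of_nonneg_left (mul_le_mul_of_nonneg_left ht1' hrpos.le) (by norm_num)
        _ ≤ (1 - ε k) * ((k:ℝ) ^ (-δ) * ((t₀:ℝ)+1)) := by
            refine mul_le_mul_of_nonneg_right (by linarith) ?_
            have : (0:ℝ) ≤ (t₀:ℝ)+1 := by positivity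
            positivity
        _ = ((k:ℝ) ^ (-δ) * (1 - ε k)) * ((t₀:ℝ)+1) := by ring
        _ ≤ α k * ((t₀:ℝ)+1) := mul_le_mul_of_nonneg_right hklb (by positivity)
    calc (1 - p) ^ (M k) ≤ Real.exp (-(p * M k)) := h2 ▸ h1
      _ ≤ Real.exp (-(k:ℝ) ^ (1 - δ) / 25) := by
          rw [Real.exp_le_exp, hpM]
          rw [neg_div]
          linarith
  calc (μ {ω | ∃ l ∉ P, ∀ j, ¬ ∃ x ∈ P, T j ω = {l, x}}).toReal
      ≤ ∑ l ∈ Pᶜ, (μ (A l)).toReal := hub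
    _ ≤ (k:ℝ) * (1 - p) ^ (M k) := hsum
    _ ≤ (k:ℝ) * Real.exp (-(k:ℝ) ^ (1 - δ) / 25) :=
        mul_le_mul_of_nonneg_left hnum (by positivity)
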